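/- In the two-candidate P_1-voter model, if p̂_{11}/p̂_{12} < (p_{11}/p_{12})·((1/2 + ε)/(1/2 − ε)), then there exists N such that for all n ≥ N, P(Z′ > 0) ≤ exp(−2·(p̂_{11}·p̂_{12}/(p̂_{11} + p̂_{12}))²·√n); i.e., a voter of class P_1 perceives a_2 as winner with probability tending to 0 as n → ∞, so she is not surprised with high probability. -/

import Mathlib

open MeasureTheory ProbabilityTheory

open Real Filter Topology

set_option maxHeartbeats 1600000

/-- Two-candidate model, voter `v ∈ P₁`.  If
`p̂₁₁/p̂₁₂ < (p₁₁/p₁₂)·((1/2+ε)/(1/2-ε))` then there is `N` such that for all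
`n ≥ N`, `P(Z' > 0) ≤ exp(-2 (p̂₁₁ p̂₁₂/(p̂₁₁+p̂₁₂))² √n)`, i.e. the voter is not
surprised with high probability. -/
theorem surprise_two_candidates_P1_not_surprised
    {Ω : Type*} [MeasurableSpace Ω] (μ : Measure Ω) [IsProbabilityMeasure μ]
    (ε : ℝ) (hε : 0 < ε) (hε' : ε < 1/2)
    (p11 p12 phat11 phat12 : ℝ)
    (hp11 : 0 < p11) (hp11' : p11 ≤ 1) (hp12 : 0 < p12) (hp12' : p12 ≤ 1)
    (hphat11 : 0 < phat11) (hphat11' : phat11 ≤ 1)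
    (hphat12 : 0 < phat12) (hphat12' : phat12 ≤ 1)
    (Y : ℕ → Ω → ℝ) (hmeas : ∀ i, Measurable (Y i))
    (hindep : iIndepFun Y μ)
    (hY1 : ∀ i, μ {ω | Y i ω = 1/phat12} = ENNReal.ofReal ((1/2 - ε) * p12))
    (hY2 : ∀ i, μ {ω | Y i ω = -1/phat11} = ENNReal.ofReal ((1/2 + ε) * p11))
    (hY0 : ∀ i, μ {ω | Y i ω = 0} =
      ENNReal.ofReal (1 - (1/2 - ε) * p12 - (1/2 + ε) * p11))
    (hcond : phat11 / phat12 < (p11 / p12) * ((1/2 + ε) / (1/2 - ε))) :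
    ∃ N : ℕ, ∀ n : ℕ, N ≤ n →
      μ {ω | 0 < (∑ i ∈ Finset.range (n - 1), Y i ω) - 1} ≤
        ENNReal.ofReal
          (Real.exp (-2 * (phat11 * phat12 / (phat11 + phat12))^2 * Real.sqrt n)) := by
  classical
  set b : ℝ := 1/phat12 with hbdef
  set a : ℝ := -1/phat11 with hadef
  set q1 : ℝ := (1/2 - ε) * p12 with hq1def
  set q2 : ℝ := (1/2 + ε) * p11 with hq2def
  have hq1pos : 0 < q1 := mul_pos (by linarith) hp12
  have hq2pos : 0 < q2 := mul_pos (by linarith) hp11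
  have hq0 : 0 ≤ 1 - q1 - q2 := by nlinarith
  have hbpos : 0 < b := by positivity
  have haneg : a < 0 := by rw [hadef]; exact div_neg_of_neg_of_pos (by norm_num) hphat11
  have hba : b ≠ a := by linarith
  have hb0 : b ≠ 0 := ne_of_gt hbpos
  have ha0 : a ≠ 0 := ne_of_lt haneg
  -- the mean is negative
  have hkey : q1 * phat11 < q2 * phat12 := by
    rw [div_mul_div_comm, div_lt_div_iff₀ hphat12 (mul_pos hp12 (by linarith))] at hcond
    nlinarith
  have hmean : q1 * b + q2 * a < 0 := by
    have h := (div_lt_div_iff₀ hphat12 hphat11).mpr hkey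
    have e1 : q1 * b = q1 / phat12 := by rw [hbdef]; ring
    have e2 : q2 * a = -(q2 / phat11) := by rw [hadef]; ring
    rw [e1, e2]; linarith
  -- the per-step mgf function
  set M : ℝ → ℝ := fun t => q1 * Real.exp (t * b) + q2 * Real.exp (t * a) + (1 - q1 - q2)
    with hMdef
  have hM0 : M 0 = 1 := by simp [hMdef]
  have hderiv : HasDerivAt M (q1 * b + q2 * a) 0 := by
    have h1 : HasDerivAt (fun t : ℝ => Real.exp (t * b)) b 0 := by
      simpa using ((hasDerivAt_id (0:ℝ)).mul_const b).exp
    have h2 : HasDerivAt (fun t : ℝ => Real.exp (t * a)) a 0 := by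
      simpa using ((hasDerivAt_id (0:ℝ)).mul_const a).exp
    simpa [hMdef] using ((h1.const_mul q1).add (h2.const_mul q2)).add_const (1 - q1 - q2)
  -- find t0 > 0 with M t0 < 1
  obtain ⟨t0, hsl, ht0pos⟩ :
      ∃ t, slope M 0 t < 0 ∧ t ∈ Set.Ioi (0:ℝ) := by
    rw [hasDerivAt_iff_tendsto_slope] at hderiv
    have hmono : 𝓝[>] (0:ℝ) ≤ 𝓝[≠] (0:ℝ) :=
      nhdsWithin_mono 0 (fun x hx => ne_of_gt hx)
    exact ((hderiv.mono_left hmono).eventually_lt_const hmean).and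
      eventually_mem_nhdsWithin |>.exists
  simp only [Set.mem_Ioi] at ht0pos
  have hMt1 : M t0 < 1 := by
    rw [slope_def_field, hM0] at hsl
    have := (div_neg_iff.mp hsl)
    rcases this with ⟨h1, h2⟩ | ⟨h1, h2⟩ <;> nlinarith
  have hMtpos : 0 < M t0 := by
    have h1 : 0 < q1 * Real.exp (t0 * b) := mul_pos hq1pos (Real.exp_pos _)
    have h2 : 0 < q2 * Real.exp (t0 * a) := mul_pos hq2pos (Real.exp_pos _)
    simp only [hMdef]; linarith
  set δ : ℝ := -Real.log (M t0) with hδdef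
  have hδpos : 0 < δ := by
    have := Real.log_neg hMtpos hMt1
    simp only [hδdef]; linarith
  set K : ℝ := phat11 * phat12 / (phat11 + phat12) with hKdef
  have hKpos : 0 < K := by positivity
  set C : ℝ := 2 * K ^ 2 with hCdef
  have hCpos : 0 < C := by positivity
  -- per-variable mgf computation
  have hsets : ∀ i, MeasurableSet {ω | Y i ω = b} ∧ MeasurableSet {ω | Y i ω = a} ∧
      MeasurableSet {ω | Y i ω = 0} := fun i =>
    ⟨hmeas i (measurableSet_singleton b), hmeas i (measurableSet_singleton a),
      hmeas i (measurableSet_singleton 0)⟩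
  have hae : ∀ i, ∀ᵐ ω ∂μ, Y i ω = b ∨ Y i ω = a ∨ Y i ω = 0 := by
    intro i
    obtain ⟨hA, hB, hC⟩ := hsets i
    have hdisj1 : Disjoint {ω | Y i ω = b} {ω | Y i ω = a} := by
      rw [Set.disjoint_left]; intro ω h1 h2; exact hba (h1.symm.trans h2)
    have hdisj2 : Disjoint ({ω | Y i ω = b} ∪ {ω | Y i ω = a}) {ω | Y i ω = 0} := by
      rw [Set.disjoint_left]; rintro ω (h1 | h1) h2
      · exact hb0 (h1.symm.trans h2)
      · exact ha0 (h1.symm.trans h2)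
    have hU : μ ({ω | Y i ω = b} ∪ {ω | Y i ω = a} ∪ {ω | Y i ω = 0}) = 1 := by
      rw [measure_union hdisj2 hC, measure_union hdisj1 hB, hY1 i, hY2 i, hY0 i,
        ← ENNReal.ofReal_add hq1pos.le hq2pos.le, ← ENNReal.ofReal_add (by linarith) hq0]
      norm_num
    have := (prob_compl_eq_zero_iff ((hA.union hB).union hC)).mpr hU
    rw [ae_iff]
    convert this using 2
    ext ω
    simp only [Set.mem_compl_iff, Set.mem_union, Set.mem_setOf_eq]
    tauto
  have hint : ∀ i, Integrable (fun ω => Real.exp (t0 * Y i ω)) μ := by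
    intro i
    obtain ⟨hA, hB, _⟩ := hsets i
    have hg : Integrable (fun ω =>
        ({ω | Y i ω = b}).indicator (fun _ => Real.exp (t0 * b) - 1) ω +
        ({ω | Y i ω = a}).indicator (fun _ => Real.exp (t0 * a) - 1) ω + 1) μ :=
      (((integrable_const _).indicator hA).add ((integrable_const _).indicator hB)).add
        (integrable_const 1)
    refine hg.congr ?_
    filter_upwards [hae i] with ω hω
    rcases hω with h | h | h <;>
      simp [Set.indicator_apply, Set.mem_setOf_eq, h, hba, hb0, ha0,
        show a ≠ b from fun hh => hba hh.symm, Ne.symm hb0, Ne.symm ha0]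
  have hmgf : ∀ i, mgf (Y i) μ t0
      = q1 * Real.exp (t0 * b) + q2 * Real.exp (t0 * a) + (1 - q1 - q2) := by
    intro i
    obtain ⟨hA, hB, _⟩ := hsets i
    have heq : (fun ω => Real.exp (t0 * Y i ω)) =ᵐ[μ] (fun ω =>
        ({ω | Y i ω = b}).indicator (fun _ => Real.exp (t0 * b) - 1) ω +
        ({ω | Y i ω = a}).indicator (fun _ => Real.exp (t0 * a) - 1) ω + 1) := by
      filter_upwards [hae i] with ω hω
      rcases hω with h | h | h <;>
        simp [Set.indicator_apply, Set.mem_setOf_eq, h, hba, hb0, ha0,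
          show a ≠ b from fun hh => hba hh.symm, Ne.symm hb0, Ne.symm ha0]
    have i1 : Integrable (fun ω =>
        ({ω | Y i ω = b}).indicator (fun _ => Real.exp (t0 * b) - 1) ω) μ :=
      (integrable_const _).indicator hA
    have i2 : Integrable (fun ω =>
        ({ω | Y i ω = a}).indicator (fun _ => Real.exp (t0 * a) - 1) ω) μ :=
      (integrable_const _).indicator hB
    have i12 : Integrable (fun ω =>
        ({ω | Y i ω = b}).indicator (fun _ => Real.exp (t0 * b) - 1) ω +
        ({ω | Y i ω = a}).indicator (fun _ => Real.exp (t0 * a) - 1) ω) μ := i1.add i2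
    rw [mgf, integral_congr_ae heq, integral_add i12 (integrable_const 1),
      integral_add i1 i2,
      integral_indicator_const _ hA, integral_indicator_const _ hB, integral_const,
      measureReal_def, measureReal_def, measureReal_def,
      hY1 i, hY2 i, ENNReal.toReal_ofReal hq1pos.le, ENNReal.toReal_ofReal hq2pos.le]
    simp only [measure_univ, ENNReal.toReal_one, smul_eq_mul, one_mul]
    ring
  -- the chosen N
  refine ⟨max 2 ⌈(2 * C / δ) ^ 2⌉₊, fun n hn => ?_⟩
  have hn2 : 2 ≤ n := le_trans (le_max_left _ _) hn
  have hnC : ((2 * C / δ) ^ 2 : ℝ) ≤ n := by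
    have : ⌈(2 * C / δ) ^ 2⌉₊ ≤ n := le_trans (le_max_right _ _) hn
    exact_mod_cast Nat.ceil_le.mp this
  set k : ℕ := n - 1 with hkdef
  have hkcast : (k : ℝ) = (n : ℝ) - 1 := by
    rw [hkdef, Nat.cast_sub (by omega)]; norm_num
  -- Chernoff bound
  have hintS : Integrable (fun ω => Real.exp (t0 * (∑ i ∈ Finset.range k, Y i) ω)) μ :=
    hindep.integrable_exp_mul_sum hmeas (fun i _ => hint i)
  have hch := measure_ge_le_exp_mul_mgf (μ := μ) (X := ∑ i ∈ Finset.range k, Y i) 1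
    ht0pos.le hintS
  have hmgfS : mgf (∑ i ∈ Finset.range k, Y i) μ t0 = (M t0) ^ k := by
    rw [hindep.mgf_sum hmeas]
    rw [Finset.prod_congr rfl (fun i _ => hmgf i), Finset.prod_const, Finset.card_range]
  rw [hmgfS] at hch
  -- the real-number estimate
  have hreal : Real.exp (-t0 * 1) * (M t0) ^ k ≤ Real.exp (-2 * K ^ 2 * Real.sqrt n) := by
    have hMexp : (M t0) ^ k = Real.exp ((k : ℝ) * Real.log (M t0)) := by
      rw [Real.exp_nat_mul, Real.exp_log hMtpos]
    rw [hMexp, ← Real.exp_add, Real.exp_le_exp]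
    have hs : Real.sqrt n ^ 2 = (n : ℝ) := Real.sq_sqrt (by positivity)
    have hs2 : 2 * C / δ ≤ Real.sqrt n :=
      (Real.le_sqrt (by positivity) (by positivity)).mpr hnC
    have hs3 : 2 * C ≤ δ * Real.sqrt n := by
      rw [div_le_iff₀ hδpos] at hs2; linarith
    have hks : (k : ℝ) * Real.log (M t0) = -((k : ℝ) * δ) := by
      simp only [hδdef]; ring
    rw [hks]
    have hsnn : (0:ℝ) ≤ Real.sqrt n := Real.sqrt_nonneg n
    have h4 : 2 * C * Real.sqrt n ≤ δ * ((n:ℝ)) := by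
      nlinarith [mul_le_mul_of_nonneg_right hs3 hsnn]
    have hn2' : (2:ℝ) ≤ n := by exact_mod_cast hn2
    have : C * Real.sqrt n ≤ (k : ℝ) * δ := by
      rw [hkcast]; nlinarith
    have hCK : -2 * K ^ 2 * Real.sqrt n = -(C * Real.sqrt n) := by rw [hCdef]; ring
    rw [hCK]; linarith
  -- put the pieces together
  calc μ {ω | 0 < (∑ i ∈ Finset.range k, Y i ω) - 1}
      ≤ μ {ω | 1 ≤ (∑ i ∈ Finset.range k, Y i) ω} := by
        apply measure_mono
        intro ω hω
        simp only [Set.mem_setOf_eq, Finset.sum_apply] at *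
        linarith
    _ = ENNReal.ofReal ((μ {ω | 1 ≤ (∑ i ∈ Finset.range k, Y i) ω}).toReal) := by
        rw [ENNReal.ofReal_toReal (measure_ne_top _ _)]
    _ ≤ ENNReal.ofReal (Real.exp (-t0 * 1) * (M t0) ^ k) := ENNReal.ofReal_le_ofReal hch
    _ ≤ ENNReal.ofReal (Real.exp (-2 * K ^ 2 * Real.sqrt n)) :=
        ENNReal.ofReal_le_ofReal hreal
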